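/- There exists γ† > 0 such that g(γ) = ln(1+γ)/γ − 1/(1+γ) is strictly increasing on (0, γ†) and strictly decreasing on (γ†, ∞). -/

import Mathlib

open Real Set

noncomputable def Hfun (x : ℝ) : ℝ := x / (1 + x) - Real.log (1 + x) + x ^ 2 / (1 + x) ^ 2

lemma hasDerivAt_Hfun {x : ℝ} (hx : 0 < 1 + x) :
    HasDerivAt Hfun (x * (1 - x) / (1 + x) ^ 3) x := by
  have hne : (1 + x) ≠ 0 := ne_of_gt hx
  have h1 : HasDerivAt (fun y : ℝ => 1 + y) 1 x := by
    simpa using (hasDerivAt_id x).const_add 1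
  have h2 : HasDerivAt (fun y : ℝ => y / (1 + y))
      ((1 * (1 + x) - x * 1) / (1 + x) ^ 2) x :=
    (hasDerivAt_id x).div h1 hne
  have h3 : HasDerivAt (fun y : ℝ => Real.log (1 + y)) (1 / (1 + x)) x := by
    have := (Real.hasDerivAt_log hne).comp x h1
    simpa [one_div, Function.comp_def] using this
  have h4 : HasDerivAt (fun y : ℝ => y ^ 2) (2 * x) x := by
    simpa using hasDerivAt_pow 2 x
  have h5 : HasDerivAt (fun y : ℝ => (1 + y) ^ 2) (2 * (1 + x)) x := by
    have := (hasDerivAt_pow 2 (1 + x)).comp x h1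
    simpa [Function.comp_def] using this
  have h6 : HasDerivAt (fun y : ℝ => y ^ 2 / (1 + y) ^ 2)
      ((2 * x * (1 + x) ^ 2 - x ^ 2 * (2 * (1 + x))) / ((1 + x) ^ 2) ^ 2) x :=
    h4.div h5 (pow_ne_zero 2 hne)
  have h7 : HasDerivAt Hfun _ x := (h2.sub h3).add h6
  convert h7 using 1
  field_simp
  ring

lemma hasDerivAt_G {x : ℝ} (hx : 0 < x) :
    HasDerivAt (fun γ : ℝ => Real.log (1 + γ) / γ - 1 / (1 + γ)) (Hfun x / x ^ 2) x := by
  have hx1 : 0 < 1 + x := by linarith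
  have hne : (1 + x) ≠ 0 := ne_of_gt hx1
  have h1 : HasDerivAt (fun y : ℝ => 1 + y) 1 x := by
    simpa using (hasDerivAt_id x).const_add 1
  have h3 : HasDerivAt (fun y : ℝ => Real.log (1 + y)) (1 / (1 + x)) x := by
    have := (Real.hasDerivAt_log hne).comp x h1
    simpa [one_div, Function.comp_def] using this
  have h2 : HasDerivAt (fun y : ℝ => Real.log (1 + y) / y)
      ((1 / (1 + x) * x - Real.log (1 + x) * 1) / x ^ 2) x :=
    h3.div (hasDerivAt_id x) (ne_of_gt hx)
  have h4 : HasDerivAt (fun y : ℝ => 1 / (1 + y))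
      ((0 * (1 + x) - 1 * 1) / (1 + x) ^ 2) x :=
    (hasDerivAt_const x 1).div h1 hne
  have h5 : HasDerivAt (fun γ : ℝ => Real.log (1 + γ) / γ - 1 / (1 + γ)) _ x := h2.sub h4
  convert h5 using 1
  simp only [Hfun]
  field_simp
  ring

theorem stmt10 (g : ℝ → ℝ)
    (hg : ∀ γ : ℝ, g γ = Real.log (1 + γ) / γ - 1 / (1 + γ)) :
    ∃ γd : ℝ, 0 < γd ∧ StrictMonoOn g (Set.Ioo 0 γd) ∧ StrictAntiOn g (Set.Ioi γd) := by
  have hgfun : g = fun γ : ℝ => Real.log (1 + γ) / γ - 1 / (1 + γ) := funext hg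
  have hmono : StrictMonoOn Hfun (Icc 0 1) := by
    apply strictMonoOn_of_deriv_pos (convex_Icc 0 1)
    · intro x hx
      have hx1 : (0:ℝ) < 1 + x := by linarith [hx.1]
      exact (hasDerivAt_Hfun hx1).continuousAt.continuousWithinAt
    · intro x hx
      rw [interior_Icc] at hx
      have hx1 : (0:ℝ) < 1 + x := by linarith [hx.1]
      rw [(hasDerivAt_Hfun hx1).deriv]
      apply div_pos
      · nlinarith [hx.1, hx.2]
      · positivity
  have hanti : StrictAntiOn Hfun (Ici 1) := by
    apply strictAntiOn_of_deriv_neg (convex_Ici 1)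
    · intro x hx
      simp only [mem_Ici] at hx
      have hx1 : (0:ℝ) < 1 + x := by linarith
      exact (hasDerivAt_Hfun hx1).continuousAt.continuousWithinAt
    · intro x hx
      rw [interior_Ici] at hx
      simp only [mem_Ioi] at hx
      have hx1 : (0:ℝ) < 1 + x := by linarith
      rw [(hasDerivAt_Hfun hx1).deriv]
      apply div_neg_of_neg_of_pos
      · nlinarith
      · positivity
  have Hzero : Hfun 0 = 0 := by simp [Hfun]
  have H1pos : 0 < Hfun 1 := by
    have := hmono (by simp : (0:ℝ) ∈ Icc (0:ℝ) 1) (by simp : (1:ℝ) ∈ Icc (0:ℝ) 1)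
      (by norm_num)
    simpa [Hzero] using this
  set B : ℝ := Real.exp 2 with hB
  have hB1 : 1 < B := by
    rw [hB]
    have := Real.exp_lt_exp.mpr (show (0:ℝ) < 2 by norm_num)
    simpa using this
  have HBneg : Hfun B < 0 := by
    have hBpos : 0 < B := by linarith
    have h1 : B / (1 + B) < 1 := by
      rw [div_lt_one (by linarith)]; linarith
    have h2 : B ^ 2 / (1 + B) ^ 2 < 1 := by
      rw [div_lt_one (by positivity)]; nlinarith
    have h3 : 2 < Real.log (1 + B) := by
      have : Real.log B < Real.log (1 + B) := Real.log_lt_log hBpos (by linarith)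
      rw [hB, Real.log_exp] at this
      exact this
    simp only [Hfun]
    linarith
  -- IVT on [1, B]
  have hcont : ContinuousOn Hfun (Icc 1 B) := by
    intro x hx
    have hx1 : (0:ℝ) < 1 + x := by linarith [hx.1]
    exact (hasDerivAt_Hfun hx1).continuousAt.continuousWithinAt
  have hsub := intermediate_value_Icc' (le_of_lt hB1) hcont
  have h0mem : (0:ℝ) ∈ Icc (Hfun B) (Hfun 1) := ⟨le_of_lt HBneg, le_of_lt H1pos⟩
  obtain ⟨γd, hγdmem, hγd0⟩ := hsub h0mem
  have hγd1 : 1 < γd := by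
    rcases lt_or_eq_of_le hγdmem.1 with h | h
    · exact h
    · exfalso; rw [← h] at hγd0; linarith
  have Hpos : ∀ x : ℝ, 0 < x → x < γd → 0 < Hfun x := by
    intro x hx0 hxγ
    rcases le_or_gt x 1 with hx1 | hx1
    · have := hmono (by simp : (0:ℝ) ∈ Icc (0:ℝ) 1) ⟨le_of_lt hx0, hx1⟩ hx0
      simpa [Hzero] using this
    · have := hanti (mem_Ici.mpr (le_of_lt hx1)) (mem_Ici.mpr (le_of_lt hγd1)) hxγ
      rw [hγd0] at this
      exact this
  have Hneg : ∀ x : ℝ, γd < x → Hfun x < 0 := by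
    intro x hx
    have := hanti (mem_Ici.mpr (le_of_lt hγd1)) (mem_Ici.mpr (by linarith)) hx
    rw [hγd0] at this
    exact this
  refine ⟨γd, by linarith, ?_, ?_⟩
  · rw [hgfun]
    apply strictMonoOn_of_deriv_pos (convex_Ioo 0 γd)
    · intro x hx
      exact (hasDerivAt_G hx.1).continuousAt.continuousWithinAt
    · intro x hx
      rw [interior_Ioo] at hx
      rw [(hasDerivAt_G hx.1).deriv]
      exact div_pos (Hpos x hx.1 hx.2) (pow_pos hx.1 2)
  · rw [hgfun]
    apply strictAntiOn_of_deriv_neg (convex_Ioi γd)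
    · intro x hx
      simp only [mem_Ioi] at hx
      have hx0 : 0 < x := by linarith
      exact (hasDerivAt_G hx0).continuousAt.continuousWithinAt
    · intro x hx
      rw [interior_Ioi] at hx
      simp only [mem_Ioi] at hx
      have hx0 : 0 < x := by linarith
      rw [(hasDerivAt_G hx0).deriv]
      apply div_neg_of_neg_of_pos (Hneg x hx) (by positivity)
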